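/- Let M be a persistence module over a finite connected poset P, and let J ⊆ I be finite connected subposets of P. Then rk^M(I) ≤ rk^M(J). -/

import Mathlib

open CategoryTheory CategoryTheory.Limits
open scoped ENNReal

noncomputable section

/-- A subposet `S` is connected if any two of its points are joined by a zigzag of
comparabilities inside `S`. -/
def PosetConn {α : Type*} [Preorder α] (S : Set α) : Prop :=
  ∀ p ∈ S, ∀ q ∈ S,
    Relation.ReflTransGen (fun a b => a ∈ S ∧ b ∈ S ∧ (a ≤ b ∨ b ≤ a)) p q

/-- An interval of a poset: a connected convex subposet. -/
def IsIntervalIn {α : Type*} [Preorder α] (S : Set α) : Prop :=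
  PosetConn S ∧ S.OrdConnected

/-- the restriction of a persistence module to a subposet, viewed in the category of all
`𝕜`-vector spaces -/
def restrictV {𝕜 : Type} [Field 𝕜] {P : Type} [PartialOrder P]
    (M : P ⥤ FGModuleCat 𝕜) (S : Set P) : ↥S ⥤ ModuleCat 𝕜 :=
  Monotone.functor (f := (Subtype.val : ↥S → P)) (fun _ _ h => h) ⋙ M ⋙ forget₂ _ _

/-- the canonical limit-to-colimit map of the restriction of `M` to `S`, computed through
the point `p` (it is independent of `p` when `S` is connected) -/
def limToColim {𝕜 : Type} [Field 𝕜] {P : Type} [PartialOrder P]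
    (M : P ⥤ FGModuleCat 𝕜) (S : Set P) (p : ↥S) :
    (limit (restrictV M S) : ModuleCat 𝕜) →ₗ[𝕜] (colimit (restrictV M S) : ModuleCat 𝕜) :=
  (limit.π (restrictV M S) p ≫ colimit.ι (restrictV M S) p).hom

/-- the generalized rank of `M` over the subposet `S`, computed through the point `p` -/
def genRankAt {𝕜 : Type} [Field 𝕜] {P : Type} [PartialOrder P]
    (M : P ⥤ FGModuleCat 𝕜) (S : Set P) (p : ↥S) : ℕ :=
  Module.finrank 𝕜 (LinearMap.range (limToColim M S p))


lemma limToColim_step {𝕜 : Type} [Field 𝕜] {P : Type} [PartialOrder P]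
    (M : P ⥤ FGModuleCat 𝕜) (S : Set P) (a b : ↥S) (h : a.1 ≤ b.1) :
    limToColim M S a = limToColim M S b := by
  have h' : a ⟶ b := homOfLE h
  show (limit.π (restrictV M S) a ≫ colimit.ι (restrictV M S) a : _ ⟶ _).hom =
    (limit.π (restrictV M S) b ≫ colimit.ι (restrictV M S) b).hom
  rw [← limit.w (restrictV M S) h', Category.assoc, colimit.w]

lemma limToColim_eq_of_conn {𝕜 : Type} [Field 𝕜] {P : Type} [PartialOrder P]
    (M : P ⥤ FGModuleCat 𝕜) (S : Set P) (hS : PosetConn S) (p q : ↥S) :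
    limToColim M S p = limToColim M S q := by
  have key : ∀ (a b : P),
      Relation.ReflTransGen (fun a b => a ∈ S ∧ b ∈ S ∧ (a ≤ b ∨ b ≤ a)) a b →
      ∀ (ha : a ∈ S) (hb : b ∈ S), limToColim M S ⟨a, ha⟩ = limToColim M S ⟨b, hb⟩ := by
    intro a b h
    induction h with
    | refl => intro _ _; rfl
    | tail _ r ih =>
      intro ha hc
      refine (ih ha r.1).trans ?_
      rcases r.2.2 with h' | h'
      · exact limToColim_step M S _ _ h'
      · exact (limToColim_step M S ⟨_, hc⟩ ⟨_, r.1⟩ h').symm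
  have := key p.1 q.1 (hS p.1 p.2 q.1 q.2) p.2 q.2
  simpa using this

/-- For finite connected subposets `J ⊆ I` of a finite connected poset `P`
and a persistence module `M` over `P`, one has `rk^M(I) ≤ rk^M(J)`. -/
theorem statement_1 {𝕜 : Type} [Field 𝕜] {P : Type} [PartialOrder P] [Fintype P]
    (hP : PosetConn (Set.univ : Set P)) (M : P ⥤ FGModuleCat 𝕜)
    (I J : Set P) (hJI : J ⊆ I) (hIconn : PosetConn I) (hJconn : PosetConn J)
    (pI : ↥I) (pJ : ↥J) :
    genRankAt M I pI ≤ genRankAt M J pJ := by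
  classical
  set incl : ↥J ⥤ ↥I :=
    Monotone.functor (f := Set.inclusion hJI) (fun _ _ h => h) with hincl
  have hres : restrictV M J = incl ⋙ restrictV M I := rfl
  set pJ' : ↥I := ⟨pJ.1, hJI pJ.2⟩ with hpJ'
  have hpt : limToColim M I pI = limToColim M I pJ' :=
    limToColim_eq_of_conn M I hIconn pI pJ'
  let f : (limit (restrictV M I) : ModuleCat 𝕜) ⟶ limit (restrictV M J) :=
    limit.pre (restrictV M I) incl
  let g : (colimit (restrictV M J) : ModuleCat 𝕜) ⟶ colimit (restrictV M I) :=
    colimit.pre (restrictV M I) incl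
  have hfact : limToColim M I pJ' =
      g.hom ∘ₗ (limToColim M J pJ) ∘ₗ f.hom := by
    show (limit.π (restrictV M I) pJ' ≫ colimit.ι (restrictV M I) pJ' : _ ⟶ _).hom =
      (f ≫ (limit.π (restrictV M J) pJ ≫ colimit.ι (restrictV M J) pJ) ≫ g).hom
    rw [← Category.assoc, ← Category.assoc]
    rw [show (f ≫ limit.π (restrictV M J) pJ : _ ⟶ _) = limit.π (restrictV M I) pJ' from
      limit.pre_π (restrictV M I) incl pJ]
    show _ = ModuleCat.Hom.hom (limit.π (restrictV M I) pJ' ≫ (colimit.ι (restrictV M J) pJ ≫ g))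
    exact congrArg (fun (h : (restrictV M I).obj pJ' ⟶ colimit (restrictV M I)) =>
      ModuleCat.Hom.hom (limit.π (restrictV M I) pJ' ≫ h))
      (colimit.ι_pre (restrictV M I) incl pJ).symm
  haveI : FiniteDimensional 𝕜 ((restrictV M J).obj pJ) :=
    (inferInstance : FiniteDimensional 𝕜 (M.obj pJ.1))
  haveI : FiniteDimensional 𝕜
      (LinearMap.range (colimit.ι (restrictV M J) pJ).hom) :=
    inferInstance
  have hmle : LinearMap.range (limToColim M J pJ) ≤
      LinearMap.range (colimit.ι (restrictV M J) pJ).hom :=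
    LinearMap.range_comp_le_range _ _
  haveI : FiniteDimensional 𝕜 (LinearMap.range (limToColim M J pJ)) :=
    Submodule.finiteDimensional_of_le hmle
  have hle2 : LinearMap.range ((limToColim M J pJ) ∘ₗ f.hom) ≤
      LinearMap.range (limToColim M J pJ) := LinearMap.range_comp_le_range _ _
  haveI : FiniteDimensional 𝕜
      (LinearMap.range ((limToColim M J pJ) ∘ₗ f.hom)) :=
    Submodule.finiteDimensional_of_le hle2
  calc genRankAt M I pI
      = Module.finrank 𝕜 (LinearMap.range (limToColim M I pJ')) := by
        unfold genRankAt; rw [hpt]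
    _ = Module.finrank 𝕜
        ((LinearMap.range ((limToColim M J pJ) ∘ₗ f.hom)).map g.hom) := by
        rw [hfact, LinearMap.range_comp]
    _ ≤ Module.finrank 𝕜 (LinearMap.range ((limToColim M J pJ) ∘ₗ f.hom)) :=
        Submodule.finrank_map_le _ _
    _ ≤ genRankAt M J pJ := Submodule.finrank_mono hle2

end
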